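/- arXiv:2504.06605 — 5 statements merged into one kernel-verified Lean document; each statement's English description precedes it below -/
import Mathlib

section
/- Let N, M be positive integers, Δ_f > 0, T = 1/Δ_f, and T_sym > 0. For all real numbers u_{n,m}, p_{n,m} (0 ≤ n ≤ N−1, 0 ≤ m ≤ M−1) and all real τ, f_d, the quantity (1/(M·N·T)) · Σ_{m=0}^{M−1} Σ_{n=0}^{N−1} u_{n,m} · p_{n,m} · e^{−i2π n Δ_f τ} · ∫_{m·T_sym}^{m·T_sym + T} e^{i2π f_d t} dt equals (sinc(π f_d T) · e^{iπ f_d T} / (M·N)) · Σ_{m=0}^{M−1} Σ_{n=0}^{N−1} u_{n,m} · p_{n,m} · e^{−i2π n Δ_f τ} · e^{i2π m f_d T_sym}, where sinc(x) = sin(x)/x for x ≠ 0 and sinc(0) = 1. -/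
open Real MeasureTheory intervalIntegral Finset

/-- Unnormalized cardinal sine: `sinc x = sin x / x` for `x ≠ 0`, `sinc 0 = 1`. -/
noncomputable def sinc (x : ℝ) : ℝ := if x = 0 then 1 else Real.sin x / x

lemma key_int (fd T a : ℝ) (hT : T ≠ 0) :
    (∫ t in a..(a+T), Complex.exp (Complex.I * (2 * π * fd * t))) =
    (T : ℂ) * (_root_.sinc (π*fd*T) : ℂ) * Complex.exp (Complex.I * (π*fd*T)) *
      Complex.exp (Complex.I * (2*π*fd*a)) := by
  rcases eq_or_ne fd 0 with hfd | hfd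
  · simp [hfd, _root_.sinc]
  · have hθ : π * fd * T ≠ 0 :=
      mul_ne_zero (mul_ne_zero Real.pi_ne_zero hfd) hT
    have hπ : (π:ℂ) ≠ 0 := by exact_mod_cast Real.pi_ne_zero
    have hfd' : (fd:ℂ) ≠ 0 := by exact_mod_cast hfd
    have hT' : (T:ℂ) ≠ 0 := by exact_mod_cast hT
    have hc : Complex.I * (2 * (π:ℂ) * fd) ≠ 0 := by
      simp [Complex.I_ne_zero, hπ, hfd']
    have hrw : ∀ t : ℝ, Complex.I * (2 * (π:ℂ) * fd * t)
        = (Complex.I * (2 * (π:ℂ) * fd)) * (t:ℂ) := fun t => by ring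
    simp_rw [hrw]
    rw [integral_exp_mul_complex hc, _root_.sinc, if_neg hθ]
    set c : ℂ := Complex.I * (2 * (π:ℂ) * fd) with hcdef
    have h1 : Complex.exp (c * ((a+T : ℝ):ℂ)) =
        Complex.exp (c * (a:ℂ)) * Complex.exp (Complex.I * ((π:ℂ)*fd*T)) *
          Complex.exp (Complex.I * ((π:ℂ)*fd*T)) := by
      rw [← Complex.exp_add, ← Complex.exp_add]
      congr 1
      push_cast
      ring
    have hB : Complex.exp (Complex.I * ((π:ℂ)*fd*T))
        = Complex.cos ((π:ℂ)*fd*T) + Complex.sin ((π:ℂ)*fd*T) * Complex.I := by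
      rw [mul_comm, Complex.exp_mul_I]
    have h2 : ((Real.sin (π*fd*T) : ℝ):ℂ) = Complex.sin ((π:ℂ)*fd*T) := by push_cast; ring_nf
    have hs : Complex.exp (Complex.I * ((π:ℂ)*fd*T)) * Complex.exp (Complex.I * ((π:ℂ)*fd*T)) - 1
        = Complex.exp (Complex.I * ((π:ℂ)*fd*T)) * (2 * Complex.I * ((Real.sin (π*fd*T) : ℝ):ℂ)) := by
      rw [h2, hB]
      linear_combination Complex.sin_sq_add_cos_sq ((π:ℂ)*fd*T)
        - (Complex.sin ((π:ℂ)*fd*T))^2 * Complex.I_sq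
    rw [div_eq_iff hc, h1]
    push_cast
    have hexpa : Complex.exp (c * (a:ℂ)) = Complex.exp (Complex.I * (2*(π:ℂ)*fd*a)) := by
      rw [hcdef]; ring_nf
    field_simp
    rw [h2] at hs
    rw [show Complex.I * ((π:ℂ)*fd*T) = Complex.I*π*fd*T by ring] at hs
    linear_combination ((π:ℂ) * fd) * hs

/-- The core summation identity of Proposition 1 (closed-form OFDM ambiguity function):
the per-symbol integrals over `[m·T_sym, m·T_sym + T]` with `T = 1/Δ_f` evaluate exactly
to a common `sinc(π f_d T)·e^{iπ f_d T}` factor times the discrete delay-Doppler sum. -/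
theorem ofdm_af_sum_identity (N M : ℕ) (hN : 0 < N) (hM : 0 < M)
    (Δf : ℝ) (hΔf : 0 < Δf) (T : ℝ) (hT : T = 1 / Δf) (Tsym : ℝ) (hTsym : 0 < Tsym)
    (u p : ℕ → ℕ → ℝ) (τ fd : ℝ) :
    (1 / ((M : ℂ) * N * T)) *
      ∑ m ∈ range M, ∑ n ∈ range N,
        (u n m : ℂ) * (p n m : ℂ) *
          Complex.exp (-Complex.I * (2 * π * n * Δf * τ)) *
          (∫ t in (m * Tsym)..(m * Tsym + T), Complex.exp (Complex.I * (2 * π * fd * t))) =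
    ((_root_.sinc (π * fd * T) : ℂ) * Complex.exp (Complex.I * (π * fd * T)) / ((M : ℂ) * N)) *
      ∑ m ∈ range M, ∑ n ∈ range N,
        (u n m : ℂ) * (p n m : ℂ) *
          Complex.exp (-Complex.I * (2 * π * n * Δf * τ)) *
          Complex.exp (Complex.I * (2 * π * m * fd * Tsym)) := by
  have hT0 : T ≠ 0 := by rw [hT]; positivity
  have hTc : (T:ℂ) ≠ 0 := by exact_mod_cast hT0
  have hMc : (M:ℂ) ≠ 0 := by exact_mod_cast hM.ne'
  have hNc : (N:ℂ) ≠ 0 := by exact_mod_cast hN.ne'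
  have hsum : ∑ m ∈ range M, ∑ n ∈ range N,
        (u n m : ℂ) * (p n m : ℂ) *
          Complex.exp (-Complex.I * (2 * π * n * Δf * τ)) *
          (∫ t in (m * Tsym)..(m * Tsym + T), Complex.exp (Complex.I * (2 * π * fd * t)))
      = ((T : ℂ) * (_root_.sinc (π * fd * T) : ℂ) * Complex.exp (Complex.I * (π * fd * T))) *
        ∑ m ∈ range M, ∑ n ∈ range N,
          (u n m : ℂ) * (p n m : ℂ) *
            Complex.exp (-Complex.I * (2 * π * n * Δf * τ)) *
            Complex.exp (Complex.I * (2 * π * m * fd * Tsym)) := by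
    rw [Finset.mul_sum]
    refine Finset.sum_congr rfl fun m _ => ?_
    rw [Finset.mul_sum]
    refine Finset.sum_congr rfl fun n _ => ?_
    rw [key_int fd T ((m:ℝ) * Tsym) hT0]
    have he : Complex.exp (Complex.I * (2*(π:ℂ)*fd*(((m:ℝ)*Tsym : ℝ):ℂ)))
        = Complex.exp (Complex.I * (2 * (π:ℂ) * (m:ℂ) * fd * Tsym)) := by
      congr 1; push_cast; ring
    rw [he]
    ring
  rw [hsum, ← mul_assoc]
  congr 1
  field_simp
end

section
/- Let N, M be positive integers and let u_{n,m}, p_{n,m} be real numbers for 0 ≤ n ≤ N−1, 0 ≤ m ≤ M−1. Then the imaginary part of Σ_{m=0}^{M−1} Σ_{m'=0}^{M−1} Σ_{n=0}^{N−1} Σ_{n'=0}^{N−1} u_{n,m} u_{n',m'} p_{n,m} p_{n',m'} · n' · e^{iπ(n'−n)/N} equals Σ_{m=0}^{M−1} Σ_{m'=0}^{M−1} Σ_{0 ≤ n < n' ≤ N−1} u_{n,m} u_{n',m'} p_{n,m} p_{n',m'} · (n'−n) · sin((n'−n)π/N). -/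
open Real Finset

/-- Reorder a quadruple sum so the inner two indices become outer. -/
lemma quad_sum_comm (N M : ℕ) (f : ℕ → ℕ → ℕ → ℕ → ℝ) :
    ∑ m ∈ range M, ∑ m' ∈ range M, ∑ n ∈ range N, ∑ n' ∈ range N, f m m' n n'
      = ∑ n ∈ range N, ∑ n' ∈ range N, ∑ m ∈ range M, ∑ m' ∈ range M, f m m' n n' := by
  have h1 : ∀ m, ∑ m' ∈ range M, ∑ n ∈ range N, ∑ n' ∈ range N, f m m' n n'
      = ∑ n ∈ range N, ∑ m' ∈ range M, ∑ n' ∈ range N, f m m' n n' :=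
    fun m => Finset.sum_comm
  simp_rw [h1]
  rw [Finset.sum_comm]
  refine Finset.sum_congr rfl fun n _ => ?_
  have h2 : ∀ m, ∑ m' ∈ range M, ∑ n' ∈ range N, f m m' n n'
      = ∑ n' ∈ range N, ∑ m' ∈ range M, f m m' n n' := fun m => Finset.sum_comm
  simp_rw [h2]
  exact Finset.sum_comm

/-- Antisymmetrization of a quadratic sum over a square into the triangle `n < n'`. -/
lemma key_tri (N : ℕ) (b : ℕ → ℝ) (g : ℕ → ℕ → ℝ)
    (hanti : ∀ n n', g n' n = - g n n') :
    ∑ n ∈ range N, ∑ n' ∈ range N, b n * b n' * ((n' : ℝ) * g n n') =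
      ∑ n ∈ range N, ∑ n' ∈ Ioo n N, b n * b n' * (((n' : ℝ) - n) * g n n') := by
  have hdiag : ∀ n, g n n = 0 := fun n => by have := hanti n n; linarith
  have hsplit : ∀ n ∈ range N,
      ∑ n' ∈ range N, b n * b n' * ((n' : ℝ) * g n n') =
        (∑ n' ∈ range n, b n * b n' * ((n' : ℝ) * g n n')) +
          ∑ n' ∈ Ioo n N, b n * b n' * ((n' : ℝ) * g n n') := by
    intro n hn
    rw [mem_range] at hn
    rw [← Finset.Ico_add_one_left_eq_Ioo, ← Finset.sum_range_add_sum_Ico _ (show n + 1 ≤ N from hn),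
      Finset.sum_range_succ, hdiag]
    ring
  rw [Finset.sum_congr rfl hsplit, Finset.sum_add_distrib]
  have hswap : ∑ n ∈ range N, ∑ n' ∈ range n, b n * b n' * ((n' : ℝ) * g n n') =
      ∑ n ∈ range N, ∑ n' ∈ Ioo n N, b n * b n' * (-(n : ℝ) * g n n') := by
    simp_rw [range_eq_Ico, ← Finset.Ico_add_one_left_eq_Ioo]
    rw [← Finset.sum_Ico_Ico_comm' 0 N (fun i j => b j * b i * ((i : ℝ) * g j i))]
    refine Finset.sum_congr rfl fun n hn => Finset.sum_congr rfl fun n' hn' => ?_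
    rw [hanti]
    ring
  rw [hswap, ← Finset.sum_add_distrib]
  refine Finset.sum_congr rfl fun n hn => ?_
  rw [← Finset.sum_add_distrib]
  exact Finset.sum_congr rfl fun n' hn' => by ring

/-- Appendix B expansion of the delay quadratic form `u₀ᵀ B u₀`: the imaginary part of
the four-fold sum with phases `e^{iπ(n'−n)/N}` equals the sine-weighted sum over
ordered pairs `n < n'`. -/
theorem delay_quadform_im_expand (N M : ℕ) (hN : 0 < N) (hM : 0 < M)
    (u p : ℕ → ℕ → ℝ) :
    (∑ m ∈ range M, ∑ m' ∈ range M, ∑ n ∈ range N, ∑ n' ∈ range N,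
        ((u n m * u n' m' * p n m * p n' m' * n' : ℝ) : ℂ) *
          Complex.exp (Complex.I * π * ((n' : ℝ) - n) / N)).im =
      ∑ m ∈ range M, ∑ m' ∈ range M, ∑ n ∈ range N, ∑ n' ∈ Ioo n N,
        u n m * u n' m' * p n m * p n' m' * ((n' : ℝ) - n) *
          Real.sin (((n' : ℝ) - n) * π / N) := by
  set g : ℕ → ℕ → ℝ := fun n n' => Real.sin ((((n' : ℝ) - n)) * π / N) with hg
  set b : ℕ → ℝ := fun n => ∑ m ∈ range M, u n m * p n m with hb
  have hanti : ∀ n n', g n' n = - g n n' := by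
    intro n n'
    rw [hg]
    simp only
    rw [← Real.sin_neg]
    congr 1
    ring
  have hexp : ∀ n n' : ℕ, (Complex.exp (Complex.I * π * ((n' : ℝ) - n) / N)).im = g n n' := by
    intro n n'
    have h1 : Complex.I * (π : ℂ) * (((n' : ℝ) : ℂ) - ((n : ℕ) : ℂ)) / ((N : ℕ) : ℂ)
        = (((((n' : ℝ) - n) * π / N : ℝ)) : ℂ) * Complex.I := by push_cast; ring
    rw [h1, Complex.exp_ofReal_mul_I_im]
  -- compute the imaginary part termwise
  have hL : (∑ m ∈ range M, ∑ m' ∈ range M, ∑ n ∈ range N, ∑ n' ∈ range N,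
        ((u n m * u n' m' * p n m * p n' m' * n' : ℝ) : ℂ) *
          Complex.exp (Complex.I * π * ((n' : ℝ) - n) / N)).im
      = ∑ m ∈ range M, ∑ m' ∈ range M, ∑ n ∈ range N, ∑ n' ∈ range N,
        (u n m * p n m) * (u n' m' * p n' m') * ((n' : ℝ) * g n n') := by
    rw [Complex.im_sum]
    refine Finset.sum_congr rfl fun m _ => ?_
    rw [Complex.im_sum]
    refine Finset.sum_congr rfl fun m' _ => ?_
    rw [Complex.im_sum]
    refine Finset.sum_congr rfl fun n _ => ?_
    rw [Complex.im_sum]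
    refine Finset.sum_congr rfl fun n' _ => ?_
    rw [Complex.mul_im, Complex.ofReal_re, Complex.ofReal_im, hexp]
    ring
  rw [hL]
  -- factor the sums over m and m'
  have hfac : ∀ (c : ℕ → ℕ → ℝ) (n n' : ℕ),
      ∑ m ∈ range M, ∑ m' ∈ range M, (u n m * p n m) * (u n' m' * p n' m') * c n n'
        = b n * b n' * c n n' := by
    intro c n n'
    rw [hb]
    simp only
    rw [Finset.sum_mul, Finset.sum_mul]
    refine Finset.sum_congr rfl fun m _ => ?_
    rw [Finset.mul_sum, Finset.sum_mul]
  rw [quad_sum_comm]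
  have hL2 : ∑ n ∈ range N, ∑ n' ∈ range N, ∑ m ∈ range M, ∑ m' ∈ range M,
        (u n m * p n m) * (u n' m' * p n' m') * ((n' : ℝ) * g n n')
      = ∑ n ∈ range N, ∑ n' ∈ range N, b n * b n' * ((n' : ℝ) * g n n') := by
    refine Finset.sum_congr rfl fun n _ => Finset.sum_congr rfl fun n' _ => ?_
    exact hfac (fun n n' => (n' : ℝ) * g n n') n n'
  rw [hL2, key_tri N b g hanti]
  -- now massage the right-hand side
  have hR : ∀ m, ∑ m' ∈ range M, ∑ n ∈ range N, ∑ n' ∈ Ioo n N,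
        u n m * u n' m' * p n m * p n' m' * ((n' : ℝ) - n) * Real.sin (((n' : ℝ) - n) * π / N)
      = ∑ n ∈ range N, ∑ m' ∈ range M, ∑ n' ∈ Ioo n N,
        u n m * u n' m' * p n m * p n' m' * ((n' : ℝ) - n) * Real.sin (((n' : ℝ) - n) * π / N) :=
    fun m => Finset.sum_comm
  conv_rhs => rw [Finset.sum_congr rfl fun m _ => hR m]
  rw [Finset.sum_comm]
  refine Finset.sum_congr rfl fun n _ => ?_
  have hR2 : ∀ m, ∑ m' ∈ range M, ∑ n' ∈ Ioo n N,
        u n m * u n' m' * p n m * p n' m' * ((n' : ℝ) - n) * Real.sin (((n' : ℝ) - n) * π / N)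
      = ∑ n' ∈ Ioo n N, ∑ m' ∈ range M,
        u n m * u n' m' * p n m * p n' m' * ((n' : ℝ) - n) * Real.sin (((n' : ℝ) - n) * π / N) :=
    fun m => Finset.sum_comm
  conv_rhs => rw [Finset.sum_congr rfl fun m _ => hR2 m]
  rw [Finset.sum_comm]
  refine Finset.sum_congr rfl fun n' _ => ?_
  have := hfac (fun n n' => (((n' : ℝ) - n) * g n n')) n n'
  rw [← this]
  refine Finset.sum_congr rfl fun m _ => Finset.sum_congr rfl fun m' _ => ?_
  rw [hg]
  ring
end

section
/- Let N, M be positive integers, let φ ∈ ℂ^N have entries φ_n = e^{−iπn/N}, let Φ = diag(φ) ∈ ℂ^{N×N}, let N̂ = diag(0,1,…,N−1) ∈ ℝ^{N×N}, and let Q₁ = 1_{M×M} ⊗ (φ (n^T ⊙ φ^H)) ∈ ℂ^{MN×MN}, where n = (0,1,…,N−1)^T, 1_{M×M} is the all-ones M×M matrix, ⊗ is the Kronecker product, and ⊙ is the entrywise product. Then for all real vectors u, p ∈ ℝ^{MN}: u^T Im{(I_M ⊗ Φ) p p^T (I_M ⊗ Φ^H N̂)} u = v^T · ((Q₁ − Q₁^H)/(2i))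 · v, where v = u ⊙ p is the entrywise product of u and p. -/
open Real Matrix
open scoped Kronecker

lemma key_sum {ι : Type*} [Fintype ι] (Q : Matrix ι ι ℂ) (w : ι → ℝ) :
    ∑ i, ∑ j, ((w i : ℝ) : ℂ) * ((2 * Complex.I)⁻¹ * (Q i j - star (Q j i)) * ((w j : ℝ) : ℂ))
      = ∑ i, ∑ j, ((w i : ℝ) : ℂ) * (((Q i j).im : ℂ) * ((w j : ℝ) : ℂ)) := by
  have h : ∀ i j : ι, ((w i : ℝ) : ℂ) * ((2 * Complex.I)⁻¹ * (Q i j - star (Q j i)) * ((w j : ℝ) : ℂ))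
      = ((w i : ℝ) : ℂ) * ((2 * Complex.I)⁻¹ * (Q i j) * ((w j : ℝ) : ℂ))
        - ((w i : ℝ) : ℂ) * ((2 * Complex.I)⁻¹ * (star (Q j i)) * ((w j : ℝ) : ℂ)) := by
    intro i j; ring
  simp only [h, Finset.sum_sub_distrib]
  rw [show (∑ i, ∑ j, ((w i : ℝ) : ℂ) * ((2 * Complex.I)⁻¹ * (star (Q j i)) * ((w j : ℝ) : ℂ)))
      = ∑ j, ∑ i, ((w i : ℝ) : ℂ) * ((2 * Complex.I)⁻¹ * (star (Q j i)) * ((w j : ℝ) : ℂ)) from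
      Finset.sum_comm]
  rw [← Finset.sum_sub_distrib]
  refine Finset.sum_congr rfl fun i _ => ?_
  rw [← Finset.sum_sub_distrib]
  refine Finset.sum_congr rfl fun j _ => ?_
  have hI : (2 * Complex.I) ≠ 0 := by simp [Complex.I_ne_zero]
  have hc := Complex.sub_conj (Q i j)
  rw [starRingEnd_apply] at hc
  push_cast at hc
  field_simp
  simp only [← starRingEnd_apply] at hc ⊢
  linear_combination ((w i : ℝ) : ℂ) * ((w j : ℝ) : ℂ) * hc

/-- Factorization (eqs. 37–38): `u₀ᵀ B u₀ = vᵀ B₀ v` with `v = u ⊙ p`, where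
`B = Im{(I_M ⊗ Φ) p pᵀ (I_M ⊗ Φᴴ N̂)}` (imaginary part taken entrywise),
`Φ = diag(e^{−iπn/N})`, `N̂ = diag(0,…,N−1)`, and
`B₀ = (Q₁ − Q₁ᴴ)/(2i)` with `Q₁ = 1_{M×M} ⊗ (φ (nᵀ ⊙ φᴴ))`. -/
theorem delay_quadform_factorization (N M : ℕ) (hN : 0 < N) (hM : 0 < M)
    (φ : Fin N → ℂ) (hφ : ∀ n : Fin N, φ n = Complex.exp (-Complex.I * π * n / N))
    (u p : Fin M × Fin N → ℝ) :
    letI Φ : Matrix (Fin N) (Fin N) ℂ := Matrix.diagonal φ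
    letI Nhat : Matrix (Fin N) (Fin N) ℂ :=
      Matrix.diagonal fun n : Fin N => ((n : ℕ) : ℂ)
    letI Q₁ : Matrix (Fin M × Fin N) (Fin M × Fin N) ℂ :=
      (Matrix.of fun _ _ : Fin M => (1 : ℂ)) ⊗ₖ
        (Matrix.of fun i j : Fin N => φ i * (((j : ℕ) : ℂ) * star (φ j)))
    letI Bmat : Matrix (Fin M × Fin N) (Fin M × Fin N) ℂ :=
      ((1 : Matrix (Fin M) (Fin M) ℂ) ⊗ₖ Φ) *
        Matrix.vecMulVec (fun i => ((p i : ℝ) : ℂ)) (fun j => ((p j : ℝ) : ℂ)) *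
        ((1 : Matrix (Fin M) (Fin M) ℂ) ⊗ₖ (Φᴴ * Nhat))
    letI B : Matrix (Fin M × Fin N) (Fin M × Fin N) ℝ :=
      Matrix.of fun i j => (Bmat i j).im
    letI v : Fin M × Fin N → ℂ := fun i => ((u i * p i : ℝ) : ℂ)
    ((u ⬝ᵥ B.mulVec u : ℝ) : ℂ) =
      v ⬝ᵥ ((2 * Complex.I)⁻¹ • (Q₁ - Q₁ᴴ)).mulVec v := by
  set Q₁ : Matrix (Fin M × Fin N) (Fin M × Fin N) ℂ :=
      (Matrix.of fun _ _ : Fin M => (1 : ℂ)) ⊗ₖ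
        (Matrix.of fun i j : Fin N => φ i * (((j : ℕ) : ℂ) * star (φ j))) with hQ₁def
  set Bmat : Matrix (Fin M × Fin N) (Fin M × Fin N) ℂ :=
      ((1 : Matrix (Fin M) (Fin M) ℂ) ⊗ₖ Matrix.diagonal φ) *
        Matrix.vecMulVec (fun i => ((p i : ℝ) : ℂ)) (fun j => ((p j : ℝ) : ℂ)) *
        ((1 : Matrix (Fin M) (Fin M) ℂ) ⊗ₖ ((Matrix.diagonal φ)ᴴ *
          Matrix.diagonal fun n : Fin N => ((n : ℕ) : ℂ))) with hBdef
  have hQ : ∀ i j : Fin M × Fin N,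
      Q₁ i j = φ i.2 * (((j.2 : ℕ) : ℂ) * star (φ j.2)) := by
    intro i j; simp [hQ₁def, Matrix.kroneckerMap_apply]
  have hB : ∀ i j : Fin M × Fin N,
      Bmat i j = ((p i : ℝ) : ℂ) * ((p j : ℝ) : ℂ) * Q₁ i j := by
    intro i j
    rw [hQ]
    simp only [hBdef, Matrix.mul_apply, Matrix.kroneckerMap_apply,
      Matrix.vecMulVec_apply, Matrix.one_apply, Matrix.diagonal_apply,
      Matrix.conjTranspose_apply, Fintype.sum_prod_type, mul_ite, ite_mul,
      mul_zero, zero_mul, mul_one, one_mul, apply_ite (star : ℂ → ℂ), star_zero, Finset.sum_ite_eq, Finset.sum_ite_eq',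
      Finset.mem_univ, if_true]
    ring
  simp only [dotProduct, Matrix.mulVec, dotProduct, Matrix.smul_apply, Matrix.sub_apply,
    Matrix.conjTranspose_apply, smul_eq_mul, Finset.mul_sum]
  rw [key_sum Q₁ (fun i => u i * p i)]
  push_cast
  refine Finset.sum_congr rfl fun i _ => Finset.sum_congr rfl fun j _ => ?_
  have him : ((Bmat i j).im : ℂ) = ((p i : ℝ) : ℂ) * ((p j : ℝ) : ℂ) * (((Q₁ i j).im : ℝ) : ℂ) := by
    rw [hB i j, show ((p i : ℝ) : ℂ) * ((p j : ℝ) : ℂ) = (((p i * p j : ℝ)) : ℂ) by push_cast; ring]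
    simp [Complex.mul_im]
  simp only [Matrix.of_apply]
  rw [him]
  ring
end

section
/- Let N ≥ 2, M ≥ 1 be integers, Δ_f > 0, and let u_{n,m}, p_{n,m} be real numbers for 0 ≤ n ≤ N−1, 0 ≤ m ≤ M−1. Define F : ℝ → ℝ by F(τ) = |Σ_{m=0}^{M−1} Σ_{n=0}^{N−1} u_{n,m} p_{n,m} e^{−i2π n Δ_f τ}|². Then F is differentiable, and at τ₀ = 1/(2NΔ_f) its derivative is F′(τ₀) = −4πΔ_f · Σ_{m=0}^{M−1} Σ_{m'=0}^{M−1} Σ_{0 ≤ n < n' ≤ N−1} u_{n,m} u_{n',m'} p_{n,m} p_{n',m'} (n'−n) sin((n'−n)π/N). In particular, if u_{n,m} ∈ {0,1}, p_{n,m} ≥ 0, and there exist (n₁,m₁), (n₂,m₂) with n₁ ≠ n₂ and u_{n₁,m₁} p_{n₁,m₁} > 0, u_{n₂,m₂} p_{n₂,m₂} > 0, then F′(τ₀) < 0. -/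
open Real Finset

private lemma tri_sum (N : ℕ) (f : ℕ → ℕ → ℝ) (hsym : ∀ i j, f i j = f j i)
    (hdiag : ∀ i, f i i = 0) :
    ∑ n ∈ range N, ∑ n' ∈ range N, f n n' =
      2 * ∑ n ∈ range N, ∑ n' ∈ Ioo n N, f n n' := by
  have hsplit : ∀ n ∈ range N, ∑ n' ∈ range N, f n n' =
      (∑ n' ∈ range n, f n n') + ∑ n' ∈ Ioo n N, f n n' := by
    intro n hn
    rw [Finset.mem_range] at hn
    rw [Finset.range_eq_Ico, ← Finset.sum_Ico_consecutive _ (Nat.zero_le n) hn.le,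
      ← Finset.Ioo_insert_left hn, Finset.sum_insert (by simp), hdiag, zero_add,
      ← Finset.range_eq_Ico]
  rw [Finset.sum_congr rfl hsplit, Finset.sum_add_distrib]
  have h2 : ∑ n ∈ range N, ∑ n' ∈ range n, f n n' =
      ∑ n ∈ range N, ∑ n' ∈ Ioo n N, f n n' := by
    rw [Finset.sum_comm' (s' := fun y => Ioo y N) (t' := range N)
      (fun x y => by simp only [Finset.mem_range, Finset.mem_Ioo]; omega)]
    exact Finset.sum_congr rfl fun n _ => Finset.sum_congr rfl fun n' _ => hsym n' n
  rw [h2]; ring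

/-- Delay-resolution first-order analysis: `F(τ) = |Σ_{m,n} u_{n,m} p_{n,m}
e^{−i2πnΔ_f τ}|²` is differentiable, its derivative at `τ₀ = 1/(2NΔ_f)` equals
`−4πΔ_f · Σ_{m,m'} Σ_{n<n'} u_{n,m}u_{n',m'}p_{n,m}p_{n',m'}(n'−n)sin((n'−n)π/N)`,
and under Boolean selections, nonnegative powers, and two selected-and-powered
elements on distinct subcarriers, this derivative is strictly negative. -/
theorem delay_mainlobe_deriv (N M : ℕ) (hN : 2 ≤ N) (hM : 1 ≤ M)
    (Δf : ℝ) (hΔf : 0 < Δf) (u p : ℕ → ℕ → ℝ) (F : ℝ → ℝ)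
    (hF : ∀ τ : ℝ, F τ =
      ‖(∑ m ∈ range M, ∑ n ∈ range N,
        ((u n m * p n m : ℝ) : ℂ) *
          Complex.exp (-Complex.I * (2 * π * n * Δf * τ)))‖ ^ 2) :
    Differentiable ℝ F ∧
    deriv F (1 / (2 * N * Δf)) =
      -(4 * π * Δf) *
        ∑ m ∈ range M, ∑ m' ∈ range M, ∑ n ∈ range N, ∑ n' ∈ Ioo n N,
          u n m * u n' m' * p n m * p n' m' * ((n' : ℝ) - n) *
            Real.sin (((n' : ℝ) - n) * π / N) ∧
    ((∀ n < N, ∀ m < M, u n m = 0 ∨ u n m = 1) →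
      (∀ n < N, ∀ m < M, 0 ≤ p n m) →
      ∀ n₁ m₁ n₂ m₂ : ℕ, n₁ < N → m₁ < M → n₂ < N → m₂ < M → n₁ ≠ n₂ →
        0 < u n₁ m₁ * p n₁ m₁ → 0 < u n₂ m₂ * p n₂ m₂ →
        deriv F (1 / (2 * N * Δf)) < 0) := by
  have hN0 : (N : ℝ) ≠ 0 := by positivity
  set τ₀ : ℝ := 1 / (2 * N * Δf) with hτ₀
  set a : ℕ → ℝ := fun n => ∑ m ∈ range M, u n m * p n m with ha
  set k : ℕ → ℕ → ℝ := fun n n' => 2 * π * Δf * ((n' : ℝ) - n) with hk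
  -- F equals a real trigonometric polynomial G
  have hFG : F = fun τ => ∑ n ∈ range N, ∑ n' ∈ range N,
      a n * a n' * Real.cos (k n n' * τ) := by
    funext τ
    rw [hF]
    set θ : ℕ → ℝ := fun n => 2 * π * n * Δf * τ with hθ
    have hS : (∑ m ∈ range M, ∑ n ∈ range N,
        ((u n m * p n m : ℝ) : ℂ) * Complex.exp (-Complex.I * (2 * π * n * Δf * τ)))
        = ∑ n ∈ range N, (a n : ℂ) * Complex.exp ((↑(-θ n) : ℂ) * Complex.I) := by
      rw [Finset.sum_comm]
      refine Finset.sum_congr rfl fun n _ => ?_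
      have he : Complex.exp (-Complex.I * (2 * π * n * Δf * τ))
          = Complex.exp ((↑(-θ n) : ℂ) * Complex.I) := by
        congr 1; push_cast [hθ]; ring
      rw [he, ← Finset.sum_mul]
      congr 1
      push_cast [ha]
      rfl
    rw [hS, Complex.sq_norm, Complex.normSq_apply, Complex.re_sum, Complex.im_sum]
    simp only [Complex.mul_re, Complex.mul_im, Complex.ofReal_re, Complex.ofReal_im,
      Complex.exp_ofReal_mul_I_re, Complex.exp_ofReal_mul_I_im, zero_mul, sub_zero,
      mul_zero, add_zero, zero_add]
    rw [Finset.sum_mul_sum, Finset.sum_mul_sum, ← Finset.sum_add_distrib]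
    refine Finset.sum_congr rfl fun n _ => ?_
    rw [← Finset.sum_add_distrib]
    refine Finset.sum_congr rfl fun n' _ => ?_
    have : a n * Real.cos (-θ n) * (a n' * Real.cos (-θ n'))
        + a n * Real.sin (-θ n) * (a n' * Real.sin (-θ n'))
        = a n * a n' * (Real.cos (-θ n) * Real.cos (-θ n')
          + Real.sin (-θ n) * Real.sin (-θ n')) := by ring
    rw [this, ← Real.cos_sub]
    congr 2
    simp only [hθ, hk]; ring
  -- derivative of G
  have hderiv : ∀ x : ℝ, HasDerivAt F
      (∑ n ∈ range N, ∑ n' ∈ range N,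
        a n * a n' * (-Real.sin (k n n' * x) * k n n')) x := by
    intro x
    rw [hFG]
    refine HasDerivAt.fun_sum fun n _ => HasDerivAt.fun_sum fun n' _ => ?_
    have h1 : HasDerivAt (fun t : ℝ => k n n' * t) (k n n') x := by
      simpa using (hasDerivAt_id x).const_mul (k n n')
    exact ((Real.hasDerivAt_cos (k n n' * x)).comp x h1).const_mul (a n * a n')
  have hDiff : Differentiable ℝ F := fun x => (hderiv x).differentiableAt
  -- value of the derivative at τ₀
  have hkτ : ∀ n n' : ℕ, k n n' * τ₀ = ((n' : ℝ) - n) * π / N := by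
    intro n n'
    simp only [hk, hτ₀]
    field_simp
  set g : ℕ → ℕ → ℝ := fun n n' =>
    a n * a n' * (((n' : ℝ) - n) * Real.sin (((n' : ℝ) - n) * π / N)) with hg
  have hD1 : deriv F τ₀ = -(2 * π * Δf) * ∑ n ∈ range N, ∑ n' ∈ range N, g n n' := by
    rw [(hderiv τ₀).deriv, Finset.mul_sum]
    refine Finset.sum_congr rfl fun n _ => ?_
    rw [Finset.mul_sum]
    refine Finset.sum_congr rfl fun n' _ => ?_
    rw [hkτ n n']
    simp only [hg, hk]
    ring
  have hgsym : ∀ i j, g i j = g j i := by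
    intro i j
    simp only [hg]
    have h1 : ((i : ℝ) - j) = -(((j : ℝ) - i)) := by ring
    rw [h1]
    have h2 : -((j : ℝ) - i) * π / N = -(((j : ℝ) - i) * π / N) := by ring
    rw [h2, Real.sin_neg]
    ring
  have hgdiag : ∀ i, g i i = 0 := by intro i; simp [hg]
  have hD2 : deriv F τ₀ = -(4 * π * Δf) * ∑ n ∈ range N, ∑ n' ∈ Ioo n N, g n n' := by
    rw [hD1, tri_sum N g hgsym hgdiag]; ring
  -- quadruple sum rearrangement
  have hquad : (∑ m ∈ range M, ∑ m' ∈ range M, ∑ n ∈ range N, ∑ n' ∈ Ioo n N,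
      u n m * u n' m' * p n m * p n' m' * ((n' : ℝ) - n) *
        Real.sin (((n' : ℝ) - n) * π / N))
      = ∑ n ∈ range N, ∑ n' ∈ Ioo n N, g n n' := by
    have step1 : (∑ m ∈ range M, ∑ m' ∈ range M, ∑ n ∈ range N, ∑ n' ∈ Ioo n N,
        u n m * u n' m' * p n m * p n' m' * ((n' : ℝ) - n) *
          Real.sin (((n' : ℝ) - n) * π / N))
        = ∑ n ∈ range N, ∑ n' ∈ Ioo n N, ∑ m ∈ range M, ∑ m' ∈ range M,
          u n m * u n' m' * p n m * p n' m' * ((n' : ℝ) - n) *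
            Real.sin (((n' : ℝ) - n) * π / N) := by
      rw [Finset.sum_congr rfl fun m _ => Finset.sum_comm, Finset.sum_comm]
      refine Finset.sum_congr rfl fun n _ => ?_
      rw [Finset.sum_congr rfl fun m _ => Finset.sum_comm, Finset.sum_comm]
    rw [step1]
    refine Finset.sum_congr rfl fun n _ => Finset.sum_congr rfl fun n' _ => ?_
    simp only [hg, ha]
    rw [Finset.sum_mul_sum, Finset.sum_mul]
    refine Finset.sum_congr rfl fun m _ => ?_
    rw [Finset.sum_mul]
    refine Finset.sum_congr rfl fun m' _ => ?_
    ring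
  refine ⟨hDiff, by rw [hD2, hquad], ?_⟩
  -- negativity
  intro hu hp n₁ m₁ n₂ m₂ hn₁ hm₁ hn₂ hm₂ hne h₁ h₂
  have hune : ∀ n < N, ∀ m < M, 0 ≤ u n m * p n m := by
    intro n hn m hm
    rcases hu n hn m hm with h | h
    · simp [h]
    · simpa [h] using hp n hn m hm
  have hapos : ∀ n m, n < N → m < M → 0 < u n m * p n m → 0 < a n := by
    intro n m hn hm hpos
    exact Finset.sum_pos' (fun m' hm' => hune n hn m' (Finset.mem_range.1 hm'))
      ⟨m, Finset.mem_range.2 hm, hpos⟩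
  have hanonneg : ∀ n < N, 0 ≤ a n := fun n hn =>
    Finset.sum_nonneg fun m hm => hune n hn m (Finset.mem_range.1 hm)
  obtain ⟨i, j, hij, hiN, hjN, hai, haj⟩ :
      ∃ i j, i < j ∧ i < N ∧ j < N ∧ 0 < a i ∧ 0 < a j := by
    rcases hne.lt_or_gt with h | h
    · exact ⟨n₁, n₂, h, hn₁, hn₂, hapos n₁ m₁ hn₁ hm₁ h₁, hapos n₂ m₂ hn₂ hm₂ h₂⟩
    · exact ⟨n₂, n₁, h, hn₂, hn₁, hapos n₂ m₂ hn₂ hm₂ h₂, hapos n₁ m₁ hn₁ hm₁ h₁⟩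
  have hgnonneg : ∀ n ∈ range N, ∀ n' ∈ Ioo n N, 0 ≤ g n n' := by
    intro n hn n' hn'
    rw [Finset.mem_range] at hn
    rw [Finset.mem_Ioo] at hn'
    have h1 : (0 : ℝ) ≤ (n' : ℝ) - n := by
      have : (n : ℝ) < n' := by exact_mod_cast hn'.1
      linarith
    have h2 : 0 ≤ Real.sin (((n' : ℝ) - n) * π / N) := by
      apply Real.sin_nonneg_of_nonneg_of_le_pi
      · positivity
      · rw [div_le_iff₀ (by positivity : (0:ℝ) < (N:ℝ))] at *
        have hnn : ((n' : ℝ) - n) ≤ N := by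
          have : (n' : ℝ) ≤ N := by exact_mod_cast hn'.2.le
          have : (0:ℝ) ≤ n := Nat.cast_nonneg n
          linarith
        nlinarith [Real.pi_pos]
    exact mul_nonneg (mul_nonneg (hanonneg n hn) (hanonneg n' hn'.2)) (mul_nonneg h1 h2)
  have hgij : 0 < g i j := by
    simp only [hg]
    have h1 : (0 : ℝ) < (j : ℝ) - i := by
      have : (i : ℝ) < j := by exact_mod_cast hij
      linarith
    have h2 : 0 < Real.sin (((j : ℝ) - i) * π / N) := by
      apply Real.sin_pos_of_pos_of_lt_pi
      · positivity
      · rw [div_lt_iff₀ (by positivity : (0:ℝ) < (N:ℝ))]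
        have hnn : ((j : ℝ) - i) < N := by
          have h3 : (j : ℝ) < N := by exact_mod_cast hjN
          have h4 : (0:ℝ) ≤ i := Nat.cast_nonneg i
          linarith
        nlinarith [Real.pi_pos]
    positivity
  have hsum_pos : 0 < ∑ n ∈ range N, ∑ n' ∈ Ioo n N, g n n' := by
    refine Finset.sum_pos' (fun n hn => Finset.sum_nonneg fun n' hn' => hgnonneg n hn n' hn')
      ⟨i, Finset.mem_range.2 hiN, Finset.sum_pos'
        (fun n' hn' => hgnonneg i (Finset.mem_range.2 hiN) n' hn')
        ⟨j, Finset.mem_Ioo.2 ⟨hij, hjN⟩, hgij⟩⟩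
  rw [hD2]
  have h4 : (0 : ℝ) < 4 * π * Δf := by positivity
  exact mul_neg_of_neg_of_pos (by linarith) hsum_pos
end

section
/- Let N ≥ 1, M ≥ 2 be integers, T_sym > 0, and let u_{n,m}, p_{n,m} be real numbers for 0 ≤ n ≤ N−1, 0 ≤ m ≤ M−1. Define G : ℝ → ℝ by G(f) = |Σ_{m=0}^{M−1} Σ_{n=0}^{N−1} u_{n,m} p_{n,m} e^{i2π m f T_sym}|². Then G is differentiable, and at f₀ = 1/(2MT_sym) its derivative is G′(f₀) = 4πT_sym · Σ_{n=0}^{N−1} Σ_{n'=0}^{N−1} Σ_{0 ≤ m < m' ≤ M−1} u_{n,m} u_{n',m'} p_{n,m} p_{n',m'} (m'−m) sin((m−m')π/M). In particular, if u_{n,m} ∈ {0,1}, p_{n,m} ≥ 0, and there exist (n₁,m₁), (n₂,m₂) with m₁ ≠ m₂ and u_{n₁,m₁} p_{n₁,m₁} > 0, u_{n₂,m₂} p_{n₂,m₂} > 0, then G′(f₀) < 0. -/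
open Real Finset

/-- Sum of a symmetric function with zero diagonal over a square equals twice the
sum over the strict upper triangle. -/
lemma sum_square_symm (F : ℕ → ℕ → ℝ) (hsymm : ∀ m m', F m m' = F m' m)
    (hdiag : ∀ m, F m m = 0) :
    ∀ M : ℕ, ∑ m ∈ range M, ∑ m' ∈ range M, F m m' =
      2 * ∑ m ∈ range M, ∑ m' ∈ Ioo m M, F m m' := by
  intro M
  induction M with
  | zero => simp
  | succ M ih =>
    have hIoo : ∀ m, m < M → Ioo m (M + 1) = insert M (Ioo m M) := by
      intro m hm
      ext x
      simp only [mem_Ioo, mem_insert]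
      omega
    have hMempty : Ioo M (M + 1) = (∅ : Finset ℕ) := by
      ext x; simp only [mem_Ioo, notMem_empty, iff_false]; omega
    rw [Finset.sum_range_succ (fun m => ∑ m' ∈ range (M+1), F m m') M,
        Finset.sum_range_succ (fun m => ∑ m' ∈ Ioo m (M+1), F m m') M,
        hMempty, Finset.sum_empty, add_zero,
        Finset.sum_range_succ (fun m' => F M m') M]
    have h1 : ∑ m ∈ range M, ∑ m' ∈ range (M + 1), F m m' =
        (∑ m ∈ range M, ∑ m' ∈ range M, F m m') + ∑ m ∈ range M, F m M := by
      rw [← Finset.sum_add_distrib]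
      exact Finset.sum_congr rfl fun m _ => Finset.sum_range_succ _ M
    have h2 : ∑ m ∈ range M, ∑ m' ∈ Ioo m (M + 1), F m m' =
        (∑ m ∈ range M, ∑ m' ∈ Ioo m M, F m m') + ∑ m ∈ range M, F m M := by
      rw [← Finset.sum_add_distrib]
      refine Finset.sum_congr rfl fun m hm => ?_
      rw [hIoo m (mem_range.mp hm), Finset.sum_insert (by simp), add_comm]
    have h3 : ∑ m' ∈ range M, F M m' = ∑ m ∈ range M, F m M :=
      Finset.sum_congr rfl fun m _ => hsymm M m
    rw [h1, h2, h3, hdiag, ih]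
    ring

/-- Doppler-resolution first-order analysis: `G(f) = |Σ_{m,n} u_{n,m} p_{n,m}
e^{i2πmfT_sym}|²` is differentiable, its derivative at `f₀ = 1/(2MT_sym)` equals
`4πT_sym · Σ_{n,n'} Σ_{m<m'} u_{n,m}u_{n',m'}p_{n,m}p_{n',m'}(m'−m)sin((m−m')π/M)`,
and under Boolean selections, nonnegative powers, and two selected-and-powered
elements on distinct OFDM symbols, this derivative is strictly negative. -/
theorem doppler_mainlobe_deriv (N M : ℕ) (hN : 1 ≤ N) (hM : 2 ≤ M)
    (Tsym : ℝ) (hTsym : 0 < Tsym) (u p : ℕ → ℕ → ℝ) (G : ℝ → ℝ)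
    (hG : ∀ f : ℝ, G f =
      ‖∑ m ∈ range M, ∑ n ∈ range N,
        ((u n m * p n m : ℝ) : ℂ) *
          Complex.exp (Complex.I * (2 * π * m * f * Tsym))‖ ^ 2) :
    Differentiable ℝ G ∧
    deriv G (1 / (2 * M * Tsym)) =
      4 * π * Tsym *
        ∑ n ∈ range N, ∑ n' ∈ range N, ∑ m ∈ range M, ∑ m' ∈ Ioo m M,
          u n m * u n' m' * p n m * p n' m' * ((m' : ℝ) - m) *
            Real.sin (((m : ℝ) - m') * π / M) ∧
    ((∀ n < N, ∀ m < M, u n m = 0 ∨ u n m = 1) →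
      (∀ n < N, ∀ m < M, 0 ≤ p n m) →
      ∀ n₁ m₁ n₂ m₂ : ℕ, n₁ < N → m₁ < M → n₂ < N → m₂ < M → m₁ ≠ m₂ →
        0 < u n₁ m₁ * p n₁ m₁ → 0 < u n₂ m₂ * p n₂ m₂ →
        deriv G (1 / (2 * M * Tsym)) < 0) := by
  have hMpos : (0 : ℝ) < M := by positivity
  set c : ℕ → ℝ := fun m => ∑ n ∈ range N, u n m * p n m with hc
  -- Step 1: rewrite G as a real double cosine sum
  have hGcos : ∀ f : ℝ, G f = ∑ m ∈ range M, ∑ m' ∈ range M,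
      c m * c m' * Real.cos (2 * π * ((m : ℝ) - m') * f * Tsym) := by
    intro f
    rw [hG f]
    have hz : (∑ m ∈ range M, ∑ n ∈ range N,
        ((u n m * p n m : ℝ) : ℂ) * Complex.exp (Complex.I * (2 * π * m * f * Tsym)))
        = ∑ m ∈ range M, ((c m : ℝ) : ℂ) *
            Complex.exp (Complex.I * (2 * π * m * f * Tsym)) := by
      refine Finset.sum_congr rfl fun m _ => ?_
      rw [← Finset.sum_mul]
      simp only [hc]
      push_cast
      ring
    rw [hz, Complex.sq_norm]
    set z := ∑ m ∈ range M, ((c m : ℝ) : ℂ) *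
        Complex.exp (Complex.I * (2 * π * m * f * Tsym)) with hzdef
    have hre : Complex.normSq z = (z * (starRingEnd ℂ) z).re := by
      rw [Complex.mul_conj, Complex.ofReal_re]
    rw [hre, hzdef, map_sum, Finset.sum_mul_sum, Complex.re_sum]
    refine Finset.sum_congr rfl fun m _ => ?_
    rw [Complex.re_sum]
    refine Finset.sum_congr rfl fun m' _ => ?_
    rw [map_mul, Complex.conj_ofReal, ← Complex.exp_conj]
    have hconj : (starRingEnd ℂ) (Complex.I * (2 * ↑π * (m' : ℂ) * ↑f * ↑Tsym))
        = -(Complex.I * (2 * ↑π * (m' : ℂ) * ↑f * ↑Tsym)) := by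
      have h0 : (2 * ↑π * (m' : ℂ) * ↑f * ↑Tsym) = ((2 * π * m' * f * Tsym : ℝ) : ℂ) := by
        push_cast; ring
      rw [h0, map_mul, Complex.conj_I, Complex.conj_ofReal]
      ring
    rw [hconj]
    have hmul : ((c m : ℝ) : ℂ) * Complex.exp (Complex.I * (2 * ↑π * ↑m * ↑f * ↑Tsym)) *
        (((c m' : ℝ) : ℂ) * Complex.exp (-(Complex.I * (2 * ↑π * ↑m' * ↑f * ↑Tsym))))
        = ((c m * c m' : ℝ) : ℂ) *
          Complex.exp (((2 * π * ((m : ℝ) - m') * f * Tsym : ℝ) : ℂ) * Complex.I) := by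
      rw [mul_mul_mul_comm, ← Complex.exp_add]
      push_cast
      ring_nf
    rw [hmul, Complex.re_ofReal_mul, Complex.exp_ofReal_mul_I_re]
  have hGeq : G = fun f => ∑ m ∈ range M, ∑ m' ∈ range M,
      c m * c m' * Real.cos (2 * π * ((m : ℝ) - m') * f * Tsym) := funext hGcos
  -- Step 2: differentiability and derivative at any point
  have hDeriv : ∀ f : ℝ, HasDerivAt G
      (∑ m ∈ range M, ∑ m' ∈ range M, c m * c m' *
        (-Real.sin (2 * π * ((m : ℝ) - m') * f * Tsym) *
          (2 * π * ((m : ℝ) - m') * Tsym))) f := by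
    intro f
    rw [hGeq]
    refine HasDerivAt.fun_sum fun m _ => ?_
    refine HasDerivAt.fun_sum fun m' _ => ?_
    have h1 : HasDerivAt (fun f : ℝ => 2 * π * ((m : ℝ) - m') * f * Tsym)
        (2 * π * ((m : ℝ) - m') * Tsym) f := by
      have := ((hasDerivAt_id f).const_mul (2 * π * ((m : ℝ) - m'))).mul_const Tsym
      simpa using this
    exact (h1.cos).const_mul (c m * c m')
  have hDiff : Differentiable ℝ G := fun f => (hDeriv f).differentiableAt
  -- Step 3: the derivative at f₀ in terms of c
  set f₀ : ℝ := 1 / (2 * M * Tsym) with hf₀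
  have harg : ∀ m m' : ℕ, 2 * π * ((m : ℝ) - m') * f₀ * Tsym
      = ((m : ℝ) - m') * π / M := by
    intro m m'
    rw [hf₀]
    field_simp
  have hKey : deriv G f₀ = ∑ m ∈ range M, ∑ m' ∈ Ioo m M,
      c m * c m' * (4 * π * Tsym * ((m' : ℝ) - m) *
        Real.sin (((m : ℝ) - m') * π / M)) := by
    rw [(hDeriv f₀).deriv]
    rw [Finset.sum_congr rfl fun m (_ : m ∈ range M) =>
      Finset.sum_congr rfl fun m' (_ : m' ∈ range M) => by rw [harg m m']]
    have hsymm : ∀ m m' : ℕ,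
        c m * c m' * (-Real.sin (((m : ℝ) - m') * π / M) *
          (2 * π * ((m : ℝ) - m') * Tsym))
        = c m' * c m * (-Real.sin (((m' : ℝ) - m) * π / M) *
          (2 * π * ((m' : ℝ) - m) * Tsym)) := by
      intro m m'
      rw [show (((m' : ℝ) - m) * π / M) = -(((m : ℝ) - m') * π / M) by ring,
        Real.sin_neg]
      ring
    have hdiag : ∀ m : ℕ,
        c m * c m * (-Real.sin (((m : ℝ) - m) * π / M) *
          (2 * π * ((m : ℝ) - m) * Tsym)) = 0 := by
      intro m; simp
    rw [sum_square_symm _ hsymm hdiag M, Finset.mul_sum]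
    refine Finset.sum_congr rfl fun m _ => ?_
    rw [Finset.mul_sum]
    refine Finset.sum_congr rfl fun m' _ => ?_
    ring
  -- Step 4: the derivative formula in the stated (expanded) form
  have hExpand : 4 * π * Tsym *
      ∑ n ∈ range N, ∑ n' ∈ range N, ∑ m ∈ range M, ∑ m' ∈ Ioo m M,
        u n m * u n' m' * p n m * p n' m' * ((m' : ℝ) - m) *
          Real.sin (((m : ℝ) - m') * π / M)
      = ∑ m ∈ range M, ∑ m' ∈ Ioo m M,
          c m * c m' * (4 * π * Tsym * ((m' : ℝ) - m) *
            Real.sin (((m : ℝ) - m') * π / M)) := by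
    have hswap : ∑ n ∈ range N, ∑ n' ∈ range N, ∑ m ∈ range M, ∑ m' ∈ Ioo m M,
        u n m * u n' m' * p n m * p n' m' * ((m' : ℝ) - m) *
          Real.sin (((m : ℝ) - m') * π / M)
        = ∑ m ∈ range M, ∑ m' ∈ Ioo m M, ∑ n ∈ range N, ∑ n' ∈ range N,
            u n m * u n' m' * p n m * p n' m' * ((m' : ℝ) - m) *
              Real.sin (((m : ℝ) - m') * π / M) := by
      calc ∑ n ∈ range N, ∑ n' ∈ range N, ∑ m ∈ range M, ∑ m' ∈ Ioo m M,
            u n m * u n' m' * p n m * p n' m' * ((m' : ℝ) - m) *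
              Real.sin (((m : ℝ) - m') * π / M)
          = ∑ n ∈ range N, ∑ m ∈ range M, ∑ n' ∈ range N, ∑ m' ∈ Ioo m M,
              u n m * u n' m' * p n m * p n' m' * ((m' : ℝ) - m) *
                Real.sin (((m : ℝ) - m') * π / M) :=
            Finset.sum_congr rfl fun n _ => Finset.sum_comm
        _ = ∑ n ∈ range N, ∑ m ∈ range M, ∑ m' ∈ Ioo m M, ∑ n' ∈ range N,
              u n m * u n' m' * p n m * p n' m' * ((m' : ℝ) - m) *
                Real.sin (((m : ℝ) - m') * π / M) :=
            Finset.sum_congr rfl fun n _ =>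
              Finset.sum_congr rfl fun m _ => Finset.sum_comm
        _ = ∑ m ∈ range M, ∑ n ∈ range N, ∑ m' ∈ Ioo m M, ∑ n' ∈ range N,
              u n m * u n' m' * p n m * p n' m' * ((m' : ℝ) - m) *
                Real.sin (((m : ℝ) - m') * π / M) := Finset.sum_comm
        _ = ∑ m ∈ range M, ∑ m' ∈ Ioo m M, ∑ n ∈ range N, ∑ n' ∈ range N,
              u n m * u n' m' * p n m * p n' m' * ((m' : ℝ) - m) *
                Real.sin (((m : ℝ) - m') * π / M) :=
            Finset.sum_congr rfl fun m _ => Finset.sum_comm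
    rw [hswap, Finset.mul_sum]
    refine Finset.sum_congr rfl fun m _ => ?_
    rw [Finset.mul_sum]
    refine Finset.sum_congr rfl fun m' _ => ?_
    simp only [hc]
    rw [Finset.sum_mul_sum, Finset.sum_mul]
    simp only [Finset.mul_sum, Finset.sum_mul]
    refine Finset.sum_congr rfl fun n _ => ?_
    refine Finset.sum_congr rfl fun n' _ => ?_
    ring
  refine ⟨hDiff, by rw [hKey, hExpand], ?_⟩
  -- Step 5: strict negativity
  intro hu hp n₁ m₁ n₂ m₂ hn₁ hm₁ hn₂ hm₂ hne hpos₁ hpos₂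
  rw [hKey]
  have hcnonneg : ∀ m < M, 0 ≤ c m := by
    intro m hm
    refine Finset.sum_nonneg fun n hn => ?_
    rcases hu n (mem_range.mp hn) m hm with h | h
    · rw [h]; simp
    · rw [h]; simpa using hp n (mem_range.mp hn) m hm
  have hcpos : ∀ n m, n < N → m < M → 0 < u n m * p n m → 0 < c m := by
    intro n m hn hm hpos
    have hle : u n m * p n m ≤ c m := by
      refine Finset.single_le_sum (f := fun n => u n m * p n m) ?_ (mem_range.mpr hn)
      intro i hi
      show 0 ≤ u i m * p i m
      rcases hu i (mem_range.mp hi) m hm with h | h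
      · rw [h]; simp
      · rw [h]; simpa using hp i (mem_range.mp hi) m hm
    linarith
  have hc₁ : 0 < c m₁ := hcpos n₁ m₁ hn₁ hm₁ hpos₁
  have hc₂ : 0 < c m₂ := hcpos n₂ m₂ hn₂ hm₂ hpos₂
  have hfac : ∀ m m' : ℕ, m < m' → m' < M →
      4 * π * Tsym * ((m' : ℝ) - m) * Real.sin (((m : ℝ) - m') * π / M) < 0 := by
    intro m m' hlt hm'
    have hd : (0 : ℝ) < (m' : ℝ) - m := by
      have : (m : ℝ) < m' := by exact_mod_cast hlt
      linarith
    have hsin : Real.sin (((m : ℝ) - m') * π / M) < 0 := by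
      have h1 : 0 < ((m' : ℝ) - m) * π / M := by positivity
      have h2 : ((m' : ℝ) - m) * π / M < π := by
        rw [div_lt_iff₀ hMpos]
        have hlt2 : (m' : ℝ) - m < M := by
          have : (m' : ℝ) < M := by exact_mod_cast hm'
          have hm0 : (0 : ℝ) ≤ m := Nat.cast_nonneg m
          linarith
        nlinarith [Real.pi_pos]
      have hpos := Real.sin_pos_of_pos_of_lt_pi h1 h2
      rw [show (((m : ℝ) - m') * π / M) = -(((m' : ℝ) - m) * π / M) by ring,
        Real.sin_neg]
      linarith
    have h4 : 0 < 4 * π * Tsym * ((m' : ℝ) - m) := by positivity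
    exact mul_neg_of_pos_of_neg h4 hsin
  have hterm_nonpos : ∀ m ∈ range M, ∀ m' ∈ Ioo m M,
      c m * c m' * (4 * π * Tsym * ((m' : ℝ) - m) *
        Real.sin (((m : ℝ) - m') * π / M)) ≤ 0 := by
    intro m hm m' hm'
    obtain ⟨h1, h2⟩ := mem_Ioo.mp hm'
    have hcc : 0 ≤ c m * c m' :=
      mul_nonneg (hcnonneg m (mem_range.mp hm)) (hcnonneg m' h2)
    exact mul_nonpos_of_nonneg_of_nonpos hcc (le_of_lt (hfac m m' h1 h2))
  obtain ⟨a, b, hab, haM, hbM, hca, hcb⟩ :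
      ∃ a b : ℕ, a < b ∧ a < M ∧ b < M ∧ 0 < c a ∧ 0 < c b := by
    rcases lt_or_gt_of_ne hne with h | h
    · exact ⟨m₁, m₂, h, hm₁, hm₂, hc₁, hc₂⟩
    · exact ⟨m₂, m₁, h, hm₂, hm₁, hc₂, hc₁⟩
  have hinner_neg : ∑ m' ∈ Ioo a M,
      c a * c m' * (4 * π * Tsym * ((m' : ℝ) - a) *
        Real.sin (((a : ℝ) - m') * π / M)) < 0 := by
    have h := Finset.sum_lt_sum (s := Ioo a M)
      (f := fun m' => c a * c m' * (4 * π * Tsym * ((m' : ℝ) - a) *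
        Real.sin (((a : ℝ) - m') * π / M))) (g := fun _ => (0 : ℝ))
      (fun m' hm' => hterm_nonpos a (mem_range.mpr haM) m' hm')
      ⟨b, mem_Ioo.mpr ⟨hab, hbM⟩,
        mul_neg_of_pos_of_neg (mul_pos hca hcb) (hfac a b hab hbM)⟩
    simpa using h
  have hfinal := Finset.sum_lt_sum (s := range M)
    (f := fun m => ∑ m' ∈ Ioo m M, c m * c m' * (4 * π * Tsym * ((m' : ℝ) - m) *
      Real.sin (((m : ℝ) - m') * π / M))) (g := fun _ => (0 : ℝ))
    (fun m hm => Finset.sum_nonpos fun m' hm' => hterm_nonpos m hm m' hm')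
    ⟨a, mem_range.mpr haM, hinner_neg⟩
  simpa using hfinal
end
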